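/- For any SIC decoding order σ (a permutation of (1,...,K)) with consecutive positions m, m+1 satisfying R_{σ(m)}/τ_{σ(m)} > R_{σ(m+1)}/τ_{σ(m+1)}, swapping positions m and m+1 strictly decreases the total power allocation sum: the difference between the original sum and the swapped sum equals [(2^{R_{σ(m)}}-1)(2^{R_{σ(m+1)}}-1)/(2^{R_{σ(m+1)}/τ_{σ(m+1)}}-1) - (2^{R_{σ(m)}}-1)(2^{R_{σ(m+1)}}-1)/(2^{R_{σ(m)}/τ_{σ(m)}}-1)] · ∏_{k=1}^{m-1} 2^{R_{σ(k)}}, which is strictly positive. -/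

import Mathlib

/-- Total power allocation coefficient sum required for NOMA to match OMA outage
performance per-user, under SIC decoding order `σ` (acting on user indices `1,…,K`). -/
noncomputable def Stot (K : ℕ) (R τ : ℕ → ℝ) (σ : ℕ → ℕ) : ℝ :=
  ((2 : ℝ) ^ (R (σ 1)) - 1) / ((2 : ℝ) ^ (R (σ 1) / τ (σ 1)) - 1) +
    ∑ l ∈ Finset.Icc 2 K,
      (((2 : ℝ) ^ (R (σ l)) - 1) / ((2 : ℝ) ^ (R (σ l) / τ (σ l)) - 1)) *
        ∏ k ∈ Finset.Icc 1 (l - 1), (2 : ℝ) ^ (R (σ k))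

lemma Stot_sum (K : ℕ) (hK : 1 ≤ K) (R τ : ℕ → ℝ) (σ : ℕ → ℕ) :
    Stot K R τ σ = ∑ l ∈ Finset.Icc 1 K,
      (((2 : ℝ) ^ (R (σ l)) - 1) / ((2 : ℝ) ^ (R (σ l) / τ (σ l)) - 1)) *
        ∏ k ∈ Finset.Icc 1 (l - 1), (2 : ℝ) ^ (R (σ k)) := by
  have h1 : Finset.Icc 1 K = insert 1 (Finset.Icc 2 K) := by
    ext x; simp [Finset.mem_Icc, Finset.mem_insert]; omega
  rw [h1, Finset.sum_insert (by simp)]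
  simp [Stot]

lemma prod_swap_inv (f : ℕ → ℝ) (m n : ℕ) (t : Finset ℕ) (hm : m ∈ t) (hn : n ∈ t) :
    ∏ k ∈ t, f (Equiv.swap m n k) = ∏ k ∈ t, f k := by
  apply Equiv.Perm.prod_comp
  intro x hx
  simp only [Set.mem_setOf_eq] at hx
  rcases eq_or_ne x m with rfl | hxm
  · exact hm
  rcases eq_or_ne x n with rfl | hxn
  · exact hn
  · exact absurd (Equiv.swap_apply_of_ne_of_ne hxm hxn) hx

theorem stmt_10 (K : ℕ) (R τ : ℕ → ℝ)
    (hR : ∀ n ∈ Finset.Icc 1 K, 0 < R n)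
    (hτ : ∀ n ∈ Finset.Icc 1 K, 0 < τ n)
    (σ : ℕ → ℕ) (hσ : Set.BijOn σ ↑(Finset.Icc 1 K) ↑(Finset.Icc 1 K))
    (m : ℕ) (hm : 1 ≤ m) (hmK : m + 1 ≤ K)
    (hinv : R (σ m) / τ (σ m) > R (σ (m + 1)) / τ (σ (m + 1))) :
    Stot K R τ σ - Stot K R τ (σ ∘ Equiv.swap m (m + 1)) =
        (((2 : ℝ) ^ (R (σ m)) - 1) * ((2 : ℝ) ^ (R (σ (m + 1))) - 1) /
            ((2 : ℝ) ^ (R (σ (m + 1)) / τ (σ (m + 1))) - 1) -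
          ((2 : ℝ) ^ (R (σ m)) - 1) * ((2 : ℝ) ^ (R (σ (m + 1))) - 1) /
            ((2 : ℝ) ^ (R (σ m) / τ (σ m)) - 1)) *
          ∏ k ∈ Finset.Icc 1 (m - 1), (2 : ℝ) ^ (R (σ k)) ∧
      0 < Stot K R τ σ - Stot K R τ (σ ∘ Equiv.swap m (m + 1)) := by
  have hK1 : 1 ≤ K := le_trans hm (by omega)
  set σ' : ℕ → ℕ := σ ∘ Equiv.swap m (m + 1) with hσ'
  set F : ℕ → ℝ := fun l =>
    (((2 : ℝ) ^ (R (σ l)) - 1) / ((2 : ℝ) ^ (R (σ l) / τ (σ l)) - 1)) *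
      ∏ k ∈ Finset.Icc 1 (l - 1), (2 : ℝ) ^ (R (σ k)) with hF
  set G : ℕ → ℝ := fun l =>
    (((2 : ℝ) ^ (R (σ' l)) - 1) / ((2 : ℝ) ^ (R (σ' l) / τ (σ' l)) - 1)) *
      ∏ k ∈ Finset.Icc 1 (l - 1), (2 : ℝ) ^ (R (σ' k)) with hG
  -- basic swap facts
  have hsm : σ' m = σ (m + 1) := by simp [hσ', Equiv.swap_apply_left]
  have hsm1 : σ' (m + 1) = σ m := by simp [hσ', Equiv.swap_apply_right]
  have hsne : ∀ k, k ≠ m → k ≠ m + 1 → σ' k = σ k := by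
    intro k h1 h2; simp [hσ', Equiv.swap_apply_of_ne_of_ne h1 h2]
  -- product over Icc 1 (m-1) is unchanged
  have hPlow : ∀ j, j ≤ m - 1 → (∏ k ∈ Finset.Icc 1 j, (2 : ℝ) ^ (R (σ' k)))
      = ∏ k ∈ Finset.Icc 1 j, (2 : ℝ) ^ (R (σ k)) := by
    intro j hj
    apply Finset.prod_congr rfl
    intro k hk
    simp only [Finset.mem_Icc] at hk
    rw [hsne k (by omega) (by omega)]
  set P : ℝ := ∏ k ∈ Finset.Icc 1 (m - 1), (2 : ℝ) ^ (R (σ k)) with hP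
  -- rewriting as sums
  have hdiff : Stot K R τ σ - Stot K R τ σ' = ∑ l ∈ Finset.Icc 1 K, (F l - G l) := by
    rw [Stot_sum K hK1 R τ σ, Stot_sum K hK1 R τ σ', Finset.sum_sub_distrib]
  -- only terms m and m+1 survive
  have hsum2 : ∑ l ∈ Finset.Icc 1 K, (F l - G l) = (F m - G m) + (F (m+1) - G (m+1)) := by
    have heq : ∑ l ∈ ({m, m+1} : Finset ℕ), (F l - G l) = ∑ l ∈ Finset.Icc 1 K, (F l - G l) := by
      apply Finset.sum_subset
      · intro x hx
        simp only [Finset.mem_insert, Finset.mem_singleton] at hx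
        simp only [Finset.mem_Icc]
        omega
      · intro x hx hxn
        simp only [Finset.mem_insert, Finset.mem_singleton, not_or] at hxn
        obtain ⟨h1, h2⟩ := hxn
        have hσx : σ' x = σ x := hsne x h1 h2
        have hprod : (∏ k ∈ Finset.Icc 1 (x - 1), (2 : ℝ) ^ (R (σ' k)))
            = ∏ k ∈ Finset.Icc 1 (x - 1), (2 : ℝ) ^ (R (σ k)) := by
          rcases lt_or_ge x m with h | h
          · exact hPlow (x - 1) (by omega)
          · -- x ≥ m + 2, so both m and m+1 lie in Icc 1 (x-1)
            have hx2 : m + 2 ≤ x := by omega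
            have : (∏ k ∈ Finset.Icc 1 (x - 1), (2 : ℝ) ^ (R (σ (Equiv.swap m (m+1) k))))
                = ∏ k ∈ Finset.Icc 1 (x - 1), (2 : ℝ) ^ (R (σ k)) := by
              apply prod_swap_inv (fun k => (2 : ℝ) ^ (R (σ k))) m (m+1)
              · simp only [Finset.mem_Icc]; omega
              · simp only [Finset.mem_Icc]; omega
            exact this
        simp only [hF, hG, hσx, hprod, sub_self]
    rw [← heq, Finset.sum_pair (by omega : m ≠ m + 1)]
  -- compute G m, F m, G (m+1), F (m+1)
  have hGm : G m = (((2 : ℝ) ^ (R (σ (m+1))) - 1) / ((2 : ℝ) ^ (R (σ (m+1)) / τ (σ (m+1))) - 1)) * P := by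
    simp only [hG, hsm, hP]
    rw [hPlow (m - 1) le_rfl]
  have hFm : F m = (((2 : ℝ) ^ (R (σ m)) - 1) / ((2 : ℝ) ^ (R (σ m) / τ (σ m)) - 1)) * P := by
    simp [hF, hP]
  have hIccm : ∀ g : ℕ → ℝ, ∏ k ∈ Finset.Icc 1 m, g k = (∏ k ∈ Finset.Icc 1 (m-1), g k) * g m := by
    intro g
    have hm' : m = (m - 1) + 1 := by omega
    conv_lhs => rw [hm']
    rw [Finset.prod_Icc_succ_top (by omega)]
    rw [← hm']
  have hFm1 : F (m+1) = (((2 : ℝ) ^ (R (σ (m+1))) - 1) / ((2 : ℝ) ^ (R (σ (m+1)) / τ (σ (m+1))) - 1)) *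
      (P * (2 : ℝ) ^ (R (σ m))) := by
    simp only [hF, Nat.add_sub_cancel, hP]
    rw [hIccm (fun k => (2 : ℝ) ^ (R (σ k)))]
  have hGm1 : G (m+1) = (((2 : ℝ) ^ (R (σ m)) - 1) / ((2 : ℝ) ^ (R (σ m) / τ (σ m)) - 1)) *
      (P * (2 : ℝ) ^ (R (σ (m+1)))) := by
    simp only [hG, Nat.add_sub_cancel, hsm1, hP]
    rw [hIccm (fun k => (2 : ℝ) ^ (R (σ' k))), hPlow (m - 1) le_rfl, hsm]
  -- the main identity
  have hmain : Stot K R τ σ - Stot K R τ σ' =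
      (((2 : ℝ) ^ (R (σ m)) - 1) * ((2 : ℝ) ^ (R (σ (m + 1))) - 1) /
          ((2 : ℝ) ^ (R (σ (m + 1)) / τ (σ (m + 1))) - 1) -
        ((2 : ℝ) ^ (R (σ m)) - 1) * ((2 : ℝ) ^ (R (σ (m + 1))) - 1) /
          ((2 : ℝ) ^ (R (σ m) / τ (σ m)) - 1)) * P := by
    rw [hdiff, hsum2, hFm, hGm, hFm1, hGm1]
    ring
  refine ⟨hmain, ?_⟩
  rw [hmain]
  -- positivity
  have hmem : m ∈ Finset.Icc 1 K := by simp only [Finset.mem_Icc]; omega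
  have hmem1 : m + 1 ∈ Finset.Icc 1 K := by simp only [Finset.mem_Icc]; omega
  have hσm : σ m ∈ Finset.Icc 1 K := hσ.mapsTo hmem
  have hσm1 : σ (m+1) ∈ Finset.Icc 1 K := hσ.mapsTo hmem1
  have hRm := hR _ hσm
  have hRm1 := hR _ hσm1
  have hτm := hτ _ hσm
  have hτm1 := hτ _ hσm1
  have hy : 0 < R (σ (m+1)) / τ (σ (m+1)) := div_pos hRm1 hτm1
  have one_lt : ∀ x : ℝ, 0 < x → 1 < (2:ℝ) ^ x := fun x hx =>
    (Real.one_lt_rpow_iff_of_pos (by norm_num)).mpr (Or.inl ⟨by norm_num, hx⟩)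
  have hd2 : (0:ℝ) < (2 : ℝ) ^ (R (σ (m + 1)) / τ (σ (m + 1))) - 1 := by
    have := one_lt _ hy; linarith
  have hd1 : (0:ℝ) < (2 : ℝ) ^ (R (σ m) / τ (σ m)) - 1 := by
    have := one_lt _ (lt_trans hy hinv); linarith
  have hdlt : (2 : ℝ) ^ (R (σ (m + 1)) / τ (σ (m + 1))) - 1 < (2 : ℝ) ^ (R (σ m) / τ (σ m)) - 1 := by
    have := (Real.rpow_lt_rpow_left_iff (x := (2:ℝ)) (by norm_num)).mpr hinv
    linarith
  have hc : (0:ℝ) < ((2 : ℝ) ^ (R (σ m)) - 1) * ((2 : ℝ) ^ (R (σ (m + 1))) - 1) := by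
    have h1 := one_lt _ hRm
    have h2 := one_lt _ hRm1
    nlinarith
  have hPpos : (0:ℝ) < P := by
    apply Finset.prod_pos
    intro k _
    exact Real.rpow_pos_of_pos (by norm_num) _
  apply mul_pos _ hPpos
  rw [sub_pos]
  exact div_lt_div_of_pos_left hc hd2 hdlt
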